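/- The language L₂ = {0ᵐ1ⁿ0ⁿ | m, n ≥ 1} over the alphabet {0,1} is truth-table reducible by a Mealy machine to L_# = {0ⁿ1ⁿ | n ≥ 1}; that is, L₂ ≤^A L_#. -/

import Mathlib

/-- A Mealy machine with oracle: finite state set `Q`, start state `q0`,
partial transition function `step`, output function `out`, and for each state `q`
a tuple of `numSuf q` query suffixes `suf q` together with a truth table `tt q`. -/
structure OracleMealy (α : Type) (β : Type) where
  Q : Type
  [fintypeQ : Fintype Q]
  q0 : Q
  step : Q → α → Option Q
  out : Q → α → List β
  numSuf : Q → ℕ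
  suf : (q : Q) → Fin (numSuf q) → List β
  tt : (q : Q) → (Fin (numSuf q) → Bool) → Bool

namespace OracleMealy

variable {α β : Type}

/-- Running the machine on input `w` from the start state, returning the final state
together with the string written on the oracle tape (`none` if a transition is undefined). -/
def run (M : OracleMealy α β) (w : List α) : Option (M.Q × List β) :=
  w.foldl
    (fun s a => s.bind fun qo => (M.step qo.1 a).map fun q' => (q', qo.2 ++ M.out qo.1 a))
    (some (M.q0, []))

open Classical in
/-- The machine `M` with oracle `L` accepts `w` iff the run on `w` is defined, ending in a
state `p` with output `o`, and the truth table of `p` applied to the answers of the oracle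
queries `o ++ M.suf p i ∈ L` yields `true`. -/
def Accepts (M : OracleMealy α β) (L : Set (List β)) (w : List α) : Prop :=
  ∃ p o, M.run w = some (p, o) ∧
    M.tt p (fun i => decide (o ++ M.suf p i ∈ L)) = true

end OracleMealy

/-- `L₁ ≤^A L₂`: truth-table reducibility by Mealy machines. -/
def MealyTTReducible (L₁ : Set (List α)) (L₂ : Set (List β)) : Prop :=
  ∃ M : OracleMealy α β, ∀ w : List α, w ∈ L₁ ↔ M.Accepts L₂ w

/-- The language `L_# = {0^n 1^n | n ≥ 1}` over the alphabet `{0,1}` (`false` = 0, `true` = 1). -/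
def Lsharp : Set (List Bool) :=
  {w | ∃ n : ℕ, 1 ≤ n ∧ w = List.replicate n false ++ List.replicate n true}

/-- The language `L₂ = {0ᵐ1ⁿ0ⁿ | m, n ≥ 1}` over `{0,1}`. -/
def Ltwo : Set (List Bool) :=
  {w | ∃ m n : ℕ, 1 ≤ m ∧ 1 ≤ n ∧
    w = List.replicate m false ++ List.replicate n true ++ List.replicate n false}

inductive MySt | s0 | s1 | s2 | s3
  deriving DecidableEq

instance : Fintype MySt := ⟨{.s0, .s1, .s2, .s3}, fun x => by cases x <;> simp⟩

open MySt in
def myM : OracleMealy Bool Bool where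
  Q := MySt
  q0 := .s0
  step q a :=
    match q, a with
    | s0, false => some s1
    | s1, false => some s1
    | s1, true => some s2
    | s2, true => some s2
    | s2, false => some s3
    | s3, false => some s3
    | _, _ => none
  out q a :=
    match q, a with
    | s1, true => [false]
    | s2, true => [false]
    | s2, false => [true]
    | s3, false => [true]
    | _, _ => []
  numSuf _ := 1
  suf _ _ := []
  tt q f := match q with | s3 => f 0 | _ => false

def myF : Option (MySt × List Bool) → Bool → Option (MySt × List Bool) :=
  fun s a => s.bind fun qo => (myM.step qo.1 a).map fun q' => (q', qo.2 ++ myM.out qo.1 a)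

lemma myM_run (w : List Bool) : myM.run w = List.foldl myF (some (.s0, [])) w := rfl

lemma foldl_s1 (k : ℕ) (o : List Bool) :
    List.foldl myF (some (.s1, o)) (List.replicate k false) = some (.s1, o) := by
  induction k with
  | zero => rfl
  | succ k ih => simpa [List.replicate_succ, myF, myM] using ih

lemma foldl_s2 (k : ℕ) (o : List Bool) :
    List.foldl myF (some (.s2, o)) (List.replicate k true)
      = some (.s2, o ++ List.replicate k false) := by
  induction k generalizing o with
  | zero => simp
  | succ k ih =>
      simp only [List.replicate_succ, List.foldl_cons]
      have : myF (some (.s2, o)) true = some (.s2, o ++ [false]) := rfl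
      rw [this, ih]
      simp [List.replicate_succ]

lemma foldl_s3 (k : ℕ) (o : List Bool) :
    List.foldl myF (some (.s3, o)) (List.replicate k false)
      = some (.s3, o ++ List.replicate k true) := by
  induction k generalizing o with
  | zero => simp
  | succ k ih =>
      simp only [List.replicate_succ, List.foldl_cons]
      have : myF (some (.s3, o)) false = some (.s3, o ++ [true]) := rfl
      rw [this, ih]
      simp [List.replicate_succ]

lemma foldl_s2_false (k : ℕ) (o : List Bool) :
    List.foldl myF (some (.s2, o)) (List.replicate (k + 1) false)
      = some (.s3, o ++ List.replicate (k + 1) true) := by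
  rw [List.replicate_succ, List.foldl_cons]
  have : myF (some (.s2, o)) false = some (.s3, o ++ [true]) := rfl
  rw [this, foldl_s3]
  simp [List.replicate_succ]

open MySt in
lemma run_char (w : List Bool) (p : MySt) (o : List Bool)
    (h : List.foldl myF (some (s0, [])) w = some (p, o)) :
    (p = s0 ∧ w = [] ∧ o = []) ∨
    (p = s1 ∧ ∃ m, 1 ≤ m ∧ w = List.replicate m false ∧ o = []) ∨
    (p = s2 ∧ ∃ m n, 1 ≤ m ∧ 1 ≤ n ∧
      w = List.replicate m false ++ List.replicate n true ∧ o = List.replicate n false) ∨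
    (p = s3 ∧ ∃ m n k, 1 ≤ m ∧ 1 ≤ n ∧ 1 ≤ k ∧
      w = List.replicate m false ++ List.replicate n true ++ List.replicate k false ∧
      o = List.replicate n false ++ List.replicate k true) := by
  induction w using List.reverseRecOn generalizing p o with
  | nil =>
      simp only [List.foldl_nil, Option.some_inj, Prod.mk.injEq] at h
      exact Or.inl ⟨h.1.symm, rfl, h.2.symm⟩
  | append_singleton w a ih =>
      rw [List.foldl_append, List.foldl_cons, List.foldl_nil] at h
      cases h' : List.foldl myF (some (s0, [])) w with
      | none => rw [h'] at h; exact absurd h (by simp [myF])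
      | some qo =>
          obtain ⟨p', o'⟩ := qo
          rw [h'] at h
          rcases ih p' o' h' with ⟨hp, hw, ho⟩ | ⟨hp, m, hm, hw, ho⟩ |
            ⟨hp, m, n, hm, hn, hw, ho⟩ | ⟨hp, m, n, k, hm, hn, hk, hw, ho⟩
          all_goals subst hp; subst hw; subst ho
          · cases a
            · have : myF (some (s0, [])) false = some (s1, []) := rfl
              rw [this] at h
              simp only [Option.some_inj, Prod.mk.injEq] at h
              exact Or.inr (Or.inl ⟨h.1.symm, 1, le_refl 1, by simp, h.2.symm⟩)
            · exact absurd h (by simp [myF, myM])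
          · cases a
            · refine Or.inr (Or.inl ⟨?_, m + 1, by omega, ?_, ?_⟩)
              · have : myF (some (s1, [])) false = some (s1, []) := rfl
                rw [this] at h
                simp only [Option.some_inj, Prod.mk.injEq] at h
                exact h.1.symm
              · have : myF (some (s1, [])) false = some (s1, []) := rfl
                rw [this] at h
                simp only [Option.some_inj, Prod.mk.injEq] at h
                simp [List.replicate_succ']
              · have : myF (some (s1, [])) false = some (s1, []) := rfl
                rw [this] at h
                simp only [Option.some_inj, Prod.mk.injEq] at h
                exact h.2.symm
            · have : myF (some (s1, [])) true = some (s2, [false]) := rfl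
              rw [this] at h
              simp only [Option.some_inj, Prod.mk.injEq] at h
              refine Or.inr (Or.inr (Or.inl ⟨h.1.symm, m, 1, hm, le_refl 1, by simp, ?_⟩))
              simp [h.2.symm]
          · cases a
            · have : myF (some (s2, List.replicate n false)) false
                  = some (s3, List.replicate n false ++ [true]) := rfl
              rw [this] at h
              simp only [Option.some_inj, Prod.mk.injEq] at h
              refine Or.inr (Or.inr (Or.inr ⟨h.1.symm, m, n, 1, hm, hn, le_refl 1, ?_, ?_⟩))
              · simp
              · simp [h.2.symm]
            · have : myF (some (s2, List.replicate n false)) true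
                  = some (s2, List.replicate n false ++ [false]) := rfl
              rw [this] at h
              simp only [Option.some_inj, Prod.mk.injEq] at h
              refine Or.inr (Or.inr (Or.inl ⟨h.1.symm, m, n + 1, hm, by omega, ?_, ?_⟩))
              · simp [List.replicate_succ', List.append_assoc]
              · simp [h.2.symm, List.replicate_succ']
          · cases a
            · have : myF (some (s3, List.replicate n false ++ List.replicate k true)) false
                  = some (s3, List.replicate n false ++ List.replicate k true ++ [true]) := rfl
              rw [this] at h
              simp only [Option.some_inj, Prod.mk.injEq] at h
              refine Or.inr (Or.inr (Or.inr ⟨h.1.symm, m, n, k + 1, hm, hn, by omega, ?_, ?_⟩))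
              · simp [List.replicate_succ', List.append_assoc]
              · simp [h.2.symm, List.replicate_succ', List.append_assoc]
            · exact absurd h (by simp [myF, myM])

lemma rep_mem_Lsharp {n k : ℕ}
    (h : List.replicate n false ++ List.replicate k true ∈ Lsharp) : n = k := by
  obtain ⟨j, hj, heq⟩ := h
  have hfalse := congrArg (List.count false) heq
  have htrue := congrArg (List.count true) heq
  simp [List.count_append, List.count_replicate] at hfalse htrue
  omega

/-- `L₂ = {0ᵐ1ⁿ0ⁿ | m, n ≥ 1}` is truth-table reducible by a Mealy machine to `L_#`. -/
theorem Ltwo_mealyTTReducible_Lsharp : MealyTTReducible Ltwo Lsharp := by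
  refine ⟨myM, fun w => ⟨?_, ?_⟩⟩
  · rintro ⟨m, n, hm, hn, rfl⟩
    obtain ⟨m, rfl⟩ : ∃ m', m = m' + 1 := ⟨m - 1, by omega⟩
    obtain ⟨n, rfl⟩ : ∃ n', n = n' + 1 := ⟨n - 1, by omega⟩
    refine ⟨.s3, List.replicate (n + 1) false ++ List.replicate (n + 1) true, ?_, ?_⟩
    · rw [myM_run, List.foldl_append, List.foldl_append]
      have h1 : List.foldl myF (some (.s0, [])) (List.replicate (m + 1) false)
          = some (.s1, []) := by
        rw [List.replicate_succ, List.foldl_cons]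
        have : myF (some (.s0, [])) false = some (.s1, []) := rfl
        rw [this, foldl_s1]
      rw [h1]
      have h2 : List.foldl myF (some (MySt.s1, [])) (List.replicate (n + 1) true)
          = some (.s2, List.replicate (n + 1) false) := by
        rw [List.replicate_succ, List.foldl_cons]
        have : myF (some (.s1, [])) true = some (.s2, [false]) := rfl
        rw [this, foldl_s2]
        simp [List.replicate_succ]
      rw [h2, foldl_s2_false]
      rfl
    · have hmem : List.replicate (n + 1) false ++ List.replicate (n + 1) true ∈ Lsharp :=
        ⟨n + 1, by omega, rfl⟩
      exact @decide_eq_true (_ ++ [] ∈ Lsharp) (Classical.propDecidable _) (by rw [List.append_nil]; exact hmem)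
  · rintro ⟨p, o, hrun, htt⟩
    rw [myM_run] at hrun
    rcases run_char w p o hrun with ⟨hp, _, _⟩ | ⟨hp, _⟩ | ⟨hp, _⟩ |
      ⟨hp, m, n, k, hm, hn, hk, hw, ho⟩
    · subst hp; simp [myM] at htt
    · subst hp; simp [myM] at htt
    · subst hp; simp [myM] at htt
    · subst hp; subst hw; subst ho
      have hmem : List.replicate n false ++ List.replicate k true ∈ Lsharp := by
        have := @of_decide_eq_true (List.replicate n false ++ List.replicate k true ++ myM.suf MySt.s3 (0 : Fin 1) ∈ Lsharp) (Classical.propDecidable _) htt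
        have e : myM.suf MySt.s3 (0 : Fin 1) = [] := rfl
        rwa [e, List.append_nil] at this
      have := rep_mem_Lsharp hmem
      subst this
      exact ⟨m, n, hm, hn, rfl⟩
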